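/- Let M = 2^{n_M} for a positive integer n_M, and let R : Fin L → ℝ³. Define on the η-particle Hilbert space ℂ^{Gᶯ} the operators U = −Σ_{ν ∈ G₀} Σ_{ℓ=1}^{L} (ζ_ℓ/(π Ω^{1/3})) · (1/‖ν‖²) · Σ_{j=1}^{η} exp(−i k_ν·R_ℓ) · S_{ν,j} and V = Σ_{ν ∈ G₀} (1/(2π Ω^{1/3})) · (1/‖ν‖²) · Σ_{i ≠ j} Σ_{p,q ∈ G with p+ν ∈ G, q−ν ∈ G} (|p+ν⟩⟨p|)_i (|q−ν⟩⟨q|)_j, where S_{ν,j} = Σ_{q ∈ G with q−ν ∈ G} (|q−ν⟩⟨q|)_j. Let Ũ and Ṽ be defined by the same formulas with each coefficient 1/‖ν‖² replaced by a(ν) = (16/(M·4^{μ(ν)})) · ⌈M·4^{μ(ν)}/(16‖ν‖²)⌉. Then ‖(U + V) − (Ũ + Ṽ)‖ ≤ (2η/(π M Ω^{1/3})) · (η − 1 + 2λ_ζ) · (7·2^{n_p+1} − 9 n_p − 11 − 3·2^{−n_p}), where the norm on the left is the operator norm. -/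

import Mathlib

open scoped Classical

noncomputable section

/-- The set `G` of plane-wave indices. -/
def Gfin (n_p : ℕ) : Finset (Fin 3 → ℤ) :=
  Fintype.piFinset fun _ => Finset.Icc (-(2 ^ (n_p - 1) - 1)) (2 ^ (n_p - 1) - 1)

/-- `G₀`: differences of frequencies in the enlarged box, excluding the zero mode. -/
def G0fin (n_p : ℕ) : Finset (Fin 3 → ℤ) :=
  (Fintype.piFinset fun _ => Finset.Icc (-(2 ^ n_p - 1)) (2 ^ n_p - 1)).erase 0

/-- Euclidean norm of an integer 3-vector. -/
def enorm3 (ν : Fin 3 → ℤ) : ℝ := Real.sqrt (∑ i, ((ν i : ℝ)) ^ 2)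

/-- The reciprocal-lattice vector `k_ν = (2π/Ω^{1/3})·ν ∈ ℝ³`. -/
def kvec (Ω : ℝ) (ν : Fin 3 → ℤ) : EuclideanSpace ℝ (Fin 3) :=
  (2 * Real.pi / Ω ^ ((1 : ℝ) / 3)) •
    (WithLp.equiv 2 (Fin 3 → ℝ)).symm fun i => (ν i : ℝ)

/-- The rank-one operator `(|p⟩⟨q|)_j` on the `η`-particle space, as a matrix. -/
def ketbra {n_p η : ℕ} (j : Fin η) (p q : ↥(Gfin n_p)) :
    Matrix (Fin η → ↥(Gfin n_p)) (Fin η → ↥(Gfin n_p)) ℂ :=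
  fun g f => if g j = p ∧ f j = q ∧ ∀ i, i ≠ j → g i = f i then 1 else 0

/-- Operator (ℓ² → ℓ²) norm of a matrix. -/
def matOpNorm {ι : Type*} [Fintype ι] [DecidableEq ι] (A : Matrix ι ι ℂ) : ℝ :=
  ‖LinearMap.toContinuousLinearMap (Matrix.toEuclideanLin A)‖

/-- The momentum-shift operator `S_{ν,j} = Σ_{q ∈ G, q−ν ∈ G} (|q−ν⟩⟨q|)_j`. -/
def Sop (n_p η : ℕ) (ν : Fin 3 → ℤ) (j : Fin η) :
    Matrix (Fin η → ↥(Gfin n_p)) (Fin η → ↥(Gfin n_p)) ℂ :=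
  ∑ q' : ↥(Gfin n_p), ∑ q : ↥(Gfin n_p),
    if (q' : Fin 3 → ℤ) = (q : Fin 3 → ℤ) - ν then ketbra j q' q else 0

/-- The electron–nucleus potential with weights `w ν` in place of `1/‖ν‖²`:
`U_w = −Σ_{ν ∈ G₀} Σ_ℓ (ζ_ℓ/(π Ω^{1/3}))·w(ν)·Σ_j exp(−i k_ν·R_ℓ)·S_{ν,j}`. -/
def UopW (n_p η L : ℕ) (Ω : ℝ) (ζ : Fin L → ℝ)
    (R : Fin L → EuclideanSpace ℝ (Fin 3)) (w : (Fin 3 → ℤ) → ℝ) :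
    Matrix (Fin η → ↥(Gfin n_p)) (Fin η → ↥(Gfin n_p)) ℂ :=
  -∑ ν ∈ G0fin n_p, ∑ ℓ : Fin L,
    (Complex.ofReal (ζ ℓ / (Real.pi * Ω ^ ((1 : ℝ) / 3)) * w ν)) •
      ∑ j : Fin η,
        Complex.exp (-(Complex.I * Complex.ofReal (inner ℝ (kvec Ω ν) (R ℓ)))) •
          Sop n_p η ν j

/-- The electron–electron potential with weights `w ν` in place of `1/‖ν‖²`:
`V_w = Σ_{ν ∈ G₀} (1/(2π Ω^{1/3}))·w(ν)·Σ_{i≠j} Σ_{p+ν∈G, q−ν∈G}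
          (|p+ν⟩⟨p|)_i (|q−ν⟩⟨q|)_j`. -/
def VopW (n_p η : ℕ) (Ω : ℝ) (w : (Fin 3 → ℤ) → ℝ) :
    Matrix (Fin η → ↥(Gfin n_p)) (Fin η → ↥(Gfin n_p)) ℂ :=
  ∑ ν ∈ G0fin n_p,
    (Complex.ofReal (1 / (2 * Real.pi * Ω ^ ((1 : ℝ) / 3)) * w ν)) •
      ∑ i : Fin η, ∑ j : Fin η,
        if i = j then 0 else
          ∑ p' : ↥(Gfin n_p), ∑ p : ↥(Gfin n_p), ∑ q' : ↥(Gfin n_p), ∑ q : ↥(Gfin n_p),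
            if (p' : Fin 3 → ℤ) = (p : Fin 3 → ℤ) + ν ∧
                (q' : Fin 3 → ℤ) = (q : Fin 3 → ℤ) - ν then
              ketbra i p' p * ketbra j q' q
            else 0

/-- `μ(ν) = ⌊log₂ max(|ν₁|,|ν₂|,|ν₃|)⌋ + 2` for nonzero `ν ∈ ℤ³`. -/
def muIdx (ν : Fin 3 → ℤ) : ℕ :=
  Nat.log 2 (max (ν 0).natAbs (max (ν 1).natAbs (ν 2).natAbs)) + 2

/-- The approximate coefficient
`a(ν) = (16/(M·4^{μ(ν)})) · ⌈M·4^{μ(ν)}/(16‖ν‖²)⌉`. -/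
def aCoeff (M : ℝ) (ν : Fin 3 → ℤ) : ℝ :=
  (16 / (M * 4 ^ muIdx ν)) * (⌈M * 4 ^ muIdx ν / (16 * enorm3 ν ^ 2)⌉ : ℤ)



/- ===== auxiliary lemmas ===== -/

lemma matOpNorm_nonneg {ι : Type*} [Fintype ι] [DecidableEq ι] (A : Matrix ι ι ℂ) :
    0 ≤ matOpNorm A := norm_nonneg _

lemma matOpNorm_zero {ι : Type*} [Fintype ι] [DecidableEq ι] :
    matOpNorm (0 : Matrix ι ι ℂ) = 0 := by
  unfold matOpNorm; rw [map_zero, map_zero, norm_zero]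

lemma matOpNorm_sum_le {ι κ : Type*} [Fintype ι] [DecidableEq ι] (s : Finset κ)
    (f : κ → Matrix ι ι ℂ) : matOpNorm (∑ i ∈ s, f i) ≤ ∑ i ∈ s, matOpNorm (f i) := by
  unfold matOpNorm; rw [map_sum, map_sum]; exact norm_sum_le _ _

lemma matOpNorm_smul {ι : Type*} [Fintype ι] [DecidableEq ι] (c : ℂ) (A : Matrix ι ι ℂ) :
    matOpNorm (c • A) = ‖c‖ * matOpNorm A := by
  unfold matOpNorm; rw [map_smul, map_smul]
  exact norm_smul c (LinearMap.toContinuousLinearMap (Matrix.toEuclideanLin A))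

lemma matOpNorm_neg {ι : Type*} [Fintype ι] [DecidableEq ι] (A : Matrix ι ι ℂ) :
    matOpNorm (-A) = matOpNorm A := by
  unfold matOpNorm; rw [map_neg, map_neg, norm_neg]

lemma matOpNorm_le_one_of_subperm {ι : Type*} [Fintype ι] [DecidableEq ι]
    (A : Matrix ι ι ℂ)
    (h01 : ∀ g f, A g f = 0 ∨ A g f = 1)
    (hrow : ∀ g f f', A g f ≠ 0 → A g f' ≠ 0 → f = f')
    (hcol : ∀ g g' f, A g f ≠ 0 → A g' f ≠ 0 → g = g') :
    matOpNorm A ≤ 1 := by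
  unfold matOpNorm
  refine ContinuousLinearMap.opNorm_le_bound _ zero_le_one fun x => ?_
  rw [one_mul, LinearMap.coe_toContinuousLinearMap']
  classical
  set D : Finset ι := Finset.univ.filter (fun g => ∃ f, A g f ≠ 0) with hD
  have hmem : ∀ g, g ∈ D ↔ ∃ f, A g f ≠ 0 := by intro g; simp [hD]
  choose! σ hσ using fun g (h : ∃ f, A g f ≠ 0) => h
  have hval : ∀ g, Matrix.toEuclideanLin A x g = if g ∈ D then x (σ g) else 0 := by
    intro g
    have hg : Matrix.toEuclideanLin A x g = ∑ f, A g f * x f := rfl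
    rw [hg]
    split_ifs with h
    · have hgσ := hσ g ((hmem g).1 h)
      rw [Finset.sum_eq_single (σ g)]
      · rcases h01 g (σ g) with h0 | h1
        · exact absurd h0 hgσ
        · rw [h1, one_mul]
      · intro f _ hne
        rcases h01 g f with h0 | h1
        · rw [h0, zero_mul]
        · exact absurd (hrow g f (σ g) (by rw [h1]; exact one_ne_zero) hgσ) hne
      · intro hf; exact absurd (Finset.mem_univ _) hf
    · apply Finset.sum_eq_zero
      intro f _
      have : A g f = 0 := by
        by_contra hne; exact h ((hmem g).2 ⟨f, hne⟩)
      rw [this, zero_mul]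
  rw [EuclideanSpace.norm_eq, EuclideanSpace.norm_eq]
  apply Real.sqrt_le_sqrt
  have h1 : ∑ g, ‖Matrix.toEuclideanLin A x g‖ ^ 2 = ∑ g ∈ D, ‖x (σ g)‖ ^ 2 := by
    rw [← Finset.sum_subset (Finset.subset_univ D)
      (fun g _ hg => by rw [hval g, if_neg hg, norm_zero]; norm_num)]
    exact Finset.sum_congr rfl fun g hg => by rw [hval g, if_pos hg]
  rw [h1]
  have hinj : Set.InjOn σ D := by
    intro g hg g' hg' hgg'
    exact hcol g g' (σ g) (hσ g ((hmem g).1 hg)) (hgg' ▸ hσ g' ((hmem g').1 hg'))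
  calc ∑ g ∈ D, ‖x (σ g)‖ ^ 2 = ∑ f ∈ D.image σ, ‖x f‖ ^ 2 :=
        (Finset.sum_image (g := σ) (f := fun f => ‖x f‖ ^ 2) fun g hg g' hg' h => hinj hg hg' h).symm
    _ ≤ ∑ f, ‖x f‖ ^ 2 :=
        Finset.sum_le_sum_of_subset_of_nonneg (Finset.subset_univ _)
          (fun f _ _ => by positivity)


lemma Sop_apply (n_p η : ℕ) (ν : Fin 3 → ℤ) (j : Fin η)
    (g f : Fin η → ↥(Gfin n_p)) :
    Sop n_p η ν j g f =
      if ((g j : Fin 3 → ℤ) = (f j : Fin 3 → ℤ) - ν ∧ ∀ i, i ≠ j → g i = f i)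
      then 1 else 0 := by
  unfold Sop
  rw [Matrix.sum_apply, Finset.sum_eq_single (g j)]
  · rw [Matrix.sum_apply, Finset.sum_eq_single (f j)]
    · by_cases hc : (g j : Fin 3 → ℤ) = (f j : Fin 3 → ℤ) - ν
      · rw [if_pos hc]
        unfold ketbra
        by_cases h2 : ∀ i, i ≠ j → g i = f i
        · rw [if_pos ⟨rfl, rfl, h2⟩, if_pos ⟨hc, h2⟩]
        · rw [if_neg (by tauto), if_neg (by tauto)]
      · rw [if_neg hc, if_neg (by tauto), Matrix.zero_apply]
    · intro q _ hq
      by_cases hc : (g j : Fin 3 → ℤ) = (q : Fin 3 → ℤ) - ν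
      · rw [if_pos hc]; unfold ketbra
        rw [if_neg (by rintro ⟨-, h, -⟩; exact hq h.symm)]
      · rw [if_neg hc, Matrix.zero_apply]
    · intro h; exact absurd (Finset.mem_univ _) h
  · intro q' _ hq'
    rw [Matrix.sum_apply]
    apply Finset.sum_eq_zero
    intro q _
    by_cases hc : (q' : Fin 3 → ℤ) = (q : Fin 3 → ℤ) - ν
    · rw [if_pos hc]; unfold ketbra
      rw [if_neg (by rintro ⟨h, -, -⟩; exact hq' h.symm)]
    · rw [if_neg hc, Matrix.zero_apply]
  · intro h; exact absurd (Finset.mem_univ _) h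

lemma ite_one_zero_ne {c : Prop} [Decidable c] (h : (if c then (1:ℂ) else 0) ≠ 0) : c := by
  by_contra hc; rw [if_neg hc] at h; exact h rfl

lemma ketbra_mul_apply {n_p η : ℕ} {i j : Fin η} (hij : i ≠ j)
    (p' p q' q : ↥(Gfin n_p)) (g f : Fin η → ↥(Gfin n_p)) :
    (ketbra i p' p * ketbra j q' q) g f =
      if (g i = p' ∧ g j = q' ∧ f i = p ∧ f j = q ∧
          ∀ k, k ≠ i → k ≠ j → g k = f k) then 1 else 0 := by
  classical
  set h₀ : Fin η → ↥(Gfin n_p) := Function.update g i p with hh₀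
  rw [Matrix.mul_apply, Finset.sum_eq_single h₀]
  · unfold ketbra
    rw [ite_zero_mul_ite_zero, one_mul]
    apply if_congr _ rfl rfl
    constructor
    · rintro ⟨⟨h1, -, -⟩, h2, h3, h4⟩
      rw [hh₀, Function.update_of_ne (Ne.symm hij)] at h2
      have hfi : f i = p := by
        have := h4 i hij
        rw [hh₀, Function.update_self] at this; exact this.symm
      refine ⟨h1, h2, hfi, h3, fun k hki hkj => ?_⟩
      have := h4 k hkj
      rwa [hh₀, Function.update_of_ne hki] at this
    · rintro ⟨h1, h2, h3, h4, h5⟩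
      refine ⟨⟨h1, by rw [hh₀, Function.update_self],
        fun k hk => by rw [hh₀, Function.update_of_ne hk]⟩,
        by rw [hh₀, Function.update_of_ne (Ne.symm hij)]; exact h2, h4,
        fun k hkj => ?_⟩
      by_cases hki : k = i
      · subst hki; rw [hh₀, Function.update_self]; exact h3.symm
      · rw [hh₀, Function.update_of_ne hki]; exact h5 k hki hkj
  · intro h _ hne
    by_cases hc : g i = p' ∧ h i = p ∧ ∀ k, k ≠ i → g k = h k
    · exfalso
      apply hne
      funext k
      by_cases hki : k = i
      · subst hki; rw [hh₀, Function.update_self]; exact hc.2.1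
      · rw [hh₀, Function.update_of_ne hki]; exact (hc.2.2 k hki).symm
    · rw [ketbra, if_neg hc, zero_mul]
  · intro h; exact absurd (Finset.mem_univ _) h

def Vterm (n_p η : ℕ) (ν : Fin 3 → ℤ) (i j : Fin η) :
    Matrix (Fin η → ↥(Gfin n_p)) (Fin η → ↥(Gfin n_p)) ℂ :=
  ∑ p' : ↥(Gfin n_p), ∑ p : ↥(Gfin n_p), ∑ q' : ↥(Gfin n_p), ∑ q : ↥(Gfin n_p),
    if (p' : Fin 3 → ℤ) = (p : Fin 3 → ℤ) + ν ∧
        (q' : Fin 3 → ℤ) = (q : Fin 3 → ℤ) - ν then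
      ketbra i p' p * ketbra j q' q
    else 0

lemma Vterm_apply {n_p η : ℕ} (ν : Fin 3 → ℤ) {i j : Fin η} (hij : i ≠ j)
    (g f : Fin η → ↥(Gfin n_p)) :
    Vterm n_p η ν i j g f =
      if ((g i : Fin 3 → ℤ) = (f i : Fin 3 → ℤ) + ν ∧
          (g j : Fin 3 → ℤ) = (f j : Fin 3 → ℤ) - ν ∧
          ∀ k, k ≠ i → k ≠ j → g k = f k) then 1 else 0 := by
  classical
  have hterm : ∀ p' p q' q : ↥(Gfin n_p),
      ((if ((p' : Fin 3 → ℤ) = (p : Fin 3 → ℤ) + ν ∧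
          (q' : Fin 3 → ℤ) = (q : Fin 3 → ℤ) - ν) then
        ketbra i p' p * ketbra j q' q else 0) g f) =
      if (((p' : Fin 3 → ℤ) = (p : Fin 3 → ℤ) + ν ∧
          (q' : Fin 3 → ℤ) = (q : Fin 3 → ℤ) - ν) ∧
          (g i = p' ∧ g j = q' ∧ f i = p ∧ f j = q ∧
            ∀ k, k ≠ i → k ≠ j → g k = f k)) then 1 else 0 := by
    intro p' p q' q
    by_cases h1 : (p' : Fin 3 → ℤ) = (p : Fin 3 → ℤ) + ν ∧
        (q' : Fin 3 → ℤ) = (q : Fin 3 → ℤ) - ν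
    · rw [if_pos h1, ketbra_mul_apply hij]
      exact if_congr (by tauto) rfl rfl
    · rw [if_neg h1, if_neg (by tauto), Matrix.zero_apply]
  unfold Vterm
  simp only [Matrix.sum_apply]
  simp only [hterm]
  rw [Finset.sum_eq_single (g i)]
  · rw [Finset.sum_eq_single (f i)]
    · rw [Finset.sum_eq_single (g j)]
      · rw [Finset.sum_eq_single (f j)]
        · exact if_congr (by tauto) rfl rfl
        · intro q _ hq
          rw [if_neg (by rintro ⟨-, -, -, -, h, -⟩; exact hq h.symm)]
        · intro h; exact absurd (Finset.mem_univ _) h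
      · intro q' _ hq'
        apply Finset.sum_eq_zero; intro q _
        rw [if_neg (by rintro ⟨-, -, h, -⟩; exact hq' h.symm)]
      · intro h; exact absurd (Finset.mem_univ _) h
    · intro p _ hp
      apply Finset.sum_eq_zero; intro q' _
      apply Finset.sum_eq_zero; intro q _
      rw [if_neg (by rintro ⟨-, -, -, h, -⟩; exact hp h.symm)]
    · intro h; exact absurd (Finset.mem_univ _) h
  · intro p' _ hp'
    apply Finset.sum_eq_zero; intro p _
    apply Finset.sum_eq_zero; intro q' _
    apply Finset.sum_eq_zero; intro q _
    rw [if_neg (by rintro ⟨-, h, -⟩; exact hp' h.symm)]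
  · intro h; exact absurd (Finset.mem_univ _) h


lemma matOpNorm_Sop_le (n_p η : ℕ) (ν : Fin 3 → ℤ) (j : Fin η) :
    matOpNorm (Sop n_p η ν j) ≤ 1 := by
  apply matOpNorm_le_one_of_subperm
  · intro g f
    rw [Sop_apply]
    split_ifs with h
    · right; rfl
    · left; rfl
  · intro g f f' h h'
    rw [Sop_apply] at h h'
    obtain ⟨h1, h2⟩ := of_not_not (fun hc => h (if_neg hc))
    obtain ⟨h1', h2'⟩ := of_not_not (fun hc => h' (if_neg hc))
    funext k
    by_cases hk : k = j
    · subst hk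
      exact Subtype.ext (sub_left_inj.mp (h1.symm.trans h1'))
    · exact (h2 k hk).symm.trans (h2' k hk)
  · intro g g' f h h'
    rw [Sop_apply] at h h'
    obtain ⟨h1, h2⟩ := of_not_not (fun hc => h (if_neg hc))
    obtain ⟨h1', h2'⟩ := of_not_not (fun hc => h' (if_neg hc))
    funext k
    by_cases hk : k = j
    · subst hk; exact Subtype.ext (h1.trans h1'.symm)
    · exact (h2 k hk).trans (h2' k hk).symm

lemma matOpNorm_Vterm_le (n_p η : ℕ) (ν : Fin 3 → ℤ) {i j : Fin η} (hij : i ≠ j) :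
    matOpNorm (Vterm n_p η ν i j) ≤ 1 := by
  apply matOpNorm_le_one_of_subperm
  · intro g f
    rw [Vterm_apply ν hij]
    split_ifs with h
    · right; rfl
    · left; rfl
  · intro g f f' h h'
    rw [Vterm_apply ν hij] at h h'
    obtain ⟨h1, h2, h3⟩ := of_not_not (fun hc => h (if_neg hc))
    obtain ⟨h1', h2', h3'⟩ := of_not_not (fun hc => h' (if_neg hc))
    funext k
    by_cases hki : k = i
    · subst hki
      exact Subtype.ext ((add_left_inj ν).mp (h1.symm.trans h1'))
    · by_cases hkj : k = j
      · subst hkj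
        exact Subtype.ext (sub_left_inj.mp (h2.symm.trans h2'))
      · exact (h3 k hki hkj).symm.trans (h3' k hki hkj)
  · intro g g' f h h'
    rw [Vterm_apply ν hij] at h h'
    obtain ⟨h1, h2, h3⟩ := of_not_not (fun hc => h (if_neg hc))
    obtain ⟨h1', h2', h3'⟩ := of_not_not (fun hc => h' (if_neg hc))
    funext k
    by_cases hki : k = i
    · subst hki; exact Subtype.ext (h1.trans h1'.symm)
    · by_cases hkj : k = j
      · subst hkj; exact Subtype.ext (h2.trans h2'.symm)
      · exact (h3 k hki hkj).trans (h3' k hki hkj).symm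


/- ===== coefficient lemmas ===== -/

lemma enorm3_pos {ν : Fin 3 → ℤ} (hν : ν ≠ 0) : 0 < enorm3 ν := by
  rw [enorm3]
  apply Real.sqrt_pos.mpr
  have hex : ∃ i, ν i ≠ 0 := by
    by_contra h; push_neg at h; exact hν (funext h)
  obtain ⟨i, hi⟩ := hex
  have h1 : (0:ℝ) < (ν i : ℝ) ^ 2 := by
    have : ((ν i : ℝ)) ≠ 0 := Int.cast_ne_zero.mpr hi
    positivity
  exact Finset.sum_pos' (fun j _ => by positivity) ⟨i, Finset.mem_univ i, h1⟩

lemma coeff_diff_bound {M : ℝ} (hM : 0 < M) {ν : Fin 3 → ℤ} (hν : ν ≠ 0) :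
    |1 / enorm3 ν ^ 2 - aCoeff M ν| ≤ 16 / (M * 4 ^ muIdx ν) := by
  have he : 0 < enorm3 ν ^ 2 := by
    have := enorm3_pos hν; positivity
  have hc : (0:ℝ) < M * 4 ^ muIdx ν := by positivity
  set t : ℝ := M * 4 ^ muIdx ν / (16 * enorm3 ν ^ 2) with ht
  have h1 : aCoeff M ν = 16 / (M * 4 ^ muIdx ν) * (⌈t⌉ : ℤ) := rfl
  have h2 : 1 / enorm3 ν ^ 2 = 16 / (M * 4 ^ muIdx ν) * t := by
    rw [ht]; field_simp
  rw [h1, h2, ← mul_sub, abs_mul, abs_of_pos (by positivity : (0:ℝ) < 16 / (M * 4 ^ muIdx ν))]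
  have h3 : |t - (⌈t⌉ : ℤ)| ≤ 1 := by
    rw [abs_sub_comm, abs_of_nonneg (sub_nonneg.mpr (Int.le_ceil t))]
    have := Int.ceil_lt_add_one t
    linarith
  calc 16 / (M * 4 ^ muIdx ν) * |t - (⌈t⌉ : ℤ)|
      ≤ 16 / (M * 4 ^ muIdx ν) * 1 := by
        apply mul_le_mul_of_nonneg_left h3 (by positivity)
    _ = 16 / (M * 4 ^ muIdx ν) := mul_one _

/- ===== counting lemmas ===== -/

def boxI (k : ℕ) : Finset (Fin 3 → ℤ) :=
  Fintype.piFinset fun _ => Finset.Icc (-(2 ^ k - 1)) (2 ^ k - 1)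



def maxAbs (ν : Fin 3 → ℤ) : ℕ := max (ν 0).natAbs (max (ν 1).natAbs (ν 2).natAbs)

lemma mem_boxI {k : ℕ} {ν : Fin 3 → ℤ} : ν ∈ boxI k ↔ maxAbs ν < 2 ^ k := by
  rw [boxI, Fintype.mem_piFinset]
  have hkey : ∀ i : Fin 3, (ν i ∈ Finset.Icc (-(2 ^ k - 1)) ((2:ℤ) ^ k - 1)) ↔
      (ν i).natAbs < 2 ^ k := by
    intro i
    rw [Finset.mem_Icc]
    have hc : ((2:ℤ) ^ k) = ((2 ^ k : ℕ) : ℤ) := by push_cast; ring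
    have hcn : 1 ≤ (2:ℕ) ^ k := Nat.one_le_two_pow
    omega
  constructor
  · intro h
    have h0 := (hkey 0).mp (h 0)
    have h1 := (hkey 1).mp (h 1)
    have h2 := (hkey 2).mp (h 2)
    rw [maxAbs]; omega
  · intro h i
    rw [hkey i]
    rw [maxAbs] at h
    have hle : (ν i).natAbs ≤ max (ν 0).natAbs (max (ν 1).natAbs (ν 2).natAbs) := by
      fin_cases i
      · exact le_max_left _ _
      · exact le_max_of_le_right (le_max_left _ _)
      · exact le_max_of_le_right (le_max_right _ _)
    omega

lemma maxAbs_pos {ν : Fin 3 → ℤ} (hν : ν ≠ 0) : 1 ≤ maxAbs ν := by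
  by_contra h
  push_neg at h
  apply hν
  funext i
  have : maxAbs ν = 0 := by omega
  rw [maxAbs] at this
  have h0 : (ν 0).natAbs = 0 ∧ (ν 1).natAbs = 0 ∧ (ν 2).natAbs = 0 := by omega
  fin_cases i <;> simp <;> omega

lemma muIdx_eq_of {k : ℕ} {ν : Fin 3 → ℤ} (h1 : 2 ^ k ≤ maxAbs ν)
    (h2 : maxAbs ν < 2 ^ (k + 1)) : muIdx ν = k + 2 := by
  rw [muIdx]
  have : Nat.log 2 (max (ν 0).natAbs (max (ν 1).natAbs (ν 2).natAbs)) = k :=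
    Nat.log_eq_of_pow_le_of_lt_pow h1 h2
  omega

lemma card_boxI (k : ℕ) : (boxI k).card = (2 ^ (k + 1) - 1) ^ 3 := by
  rw [boxI, Fintype.card_piFinset]
  have hone : (1:ℕ) ≤ 2 ^ (k + 1) := Nat.one_le_two_pow
  have hcard : (Finset.Icc (-(2 ^ k - 1)) ((2:ℤ) ^ k - 1)).card = 2 ^ (k + 1) - 1 := by
    rw [Int.card_Icc]
    have hh : (((2:ℕ) ^ (k + 1) : ℕ) : ℤ) = 2 * 2 ^ k := by push_cast; ring
    omega
  simp only [hcard, Finset.prod_const, Finset.card_univ, Fintype.card_fin]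

lemma zero_mem_boxI (k : ℕ) : (0 : Fin 3 → ℤ) ∈ boxI k := by
  rw [mem_boxI]
  have : maxAbs 0 = 0 := by rw [maxAbs]; simp
  rw [this]
  exact Nat.pow_pos (by norm_num)

lemma sum_mu_eq (n : ℕ) (hn : 1 ≤ n) :
    ∑ ν ∈ (boxI n).erase 0, (16 / (4:ℝ) ^ muIdx ν) =
      7 * 2 ^ (n + 3) - 36 * n - 44 - 12 / 2 ^ n := by
  induction n, hn using Nat.le_induction with
  | base =>
    have hmu : ∀ ν ∈ (boxI 1).erase 0, (16 / (4:ℝ) ^ muIdx ν) = 1 := by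
      intro ν hν
      obtain ⟨hν0, hνb⟩ := Finset.mem_erase.mp hν
      have h2 : maxAbs ν < 2 ^ 1 := mem_boxI.mp hνb
      have h1 : 2 ^ 0 ≤ maxAbs ν := maxAbs_pos hν0
      rw [muIdx_eq_of h1 (by omega)]
      norm_num
    rw [Finset.sum_congr rfl hmu, Finset.sum_const,
      Finset.card_erase_of_mem (zero_mem_boxI 1), card_boxI 1]
    norm_num
  | succ n hn ih =>
    have hsub : boxI n ⊆ boxI (n + 1) := by
      intro ν hν
      rw [mem_boxI] at hν ⊢
      calc maxAbs ν < 2 ^ n := hν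
        _ ≤ 2 ^ (n + 1) := Nat.pow_le_pow_right (by norm_num) (by omega)
    have hpart : (boxI (n + 1)).erase 0 =
        (boxI n).erase 0 ∪ (boxI (n + 1) \ boxI n) := by
      ext ν
      simp only [Finset.mem_erase, Finset.mem_union, Finset.mem_sdiff]
      constructor
      · rintro ⟨hν0, hνb⟩
        by_cases hs : ν ∈ boxI n
        · exact Or.inl ⟨hν0, hs⟩
        · exact Or.inr ⟨hνb, hs⟩
      · rintro (⟨hν0, hs⟩ | ⟨hb, hs⟩)
        · exact ⟨hν0, hsub hs⟩
        · exact ⟨fun h0 => hs (h0 ▸ zero_mem_boxI n), hb⟩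
    have hdisj : Disjoint ((boxI n).erase 0) (boxI (n + 1) \ boxI n) :=
      Finset.disjoint_of_subset_left (Finset.erase_subset 0 _)
        Finset.disjoint_sdiff
    rw [hpart, Finset.sum_union hdisj, ih]
    have hmu : ∀ ν ∈ boxI (n + 1) \ boxI n,
        (16 / (4:ℝ) ^ muIdx ν) = 16 / 4 ^ (n + 2) := by
      intro ν hν
      obtain ⟨hb, hnb⟩ := Finset.mem_sdiff.mp hν
      rw [muIdx_eq_of (le_of_not_gt (fun h => hnb (mem_boxI.mpr h))) (mem_boxI.mp hb)]
    rw [Finset.sum_congr rfl hmu, Finset.sum_const,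
      Finset.card_sdiff_of_subset hsub, card_boxI, card_boxI, nsmul_eq_mul]
    have hle1 : (1:ℕ) ≤ 2 ^ (n + 1) := Nat.one_le_two_pow
    have hle2 : (1:ℕ) ≤ 2 ^ (n + 2) := Nat.one_le_two_pow
    have hle3 : ((2:ℕ) ^ (n + 1) - 1) ^ 3 ≤ (2 ^ (n + 2) - 1) ^ 3 := by
      apply Nat.pow_le_pow_left
      have : (2:ℕ) ^ (n + 1) ≤ 2 ^ (n + 2) := Nat.pow_le_pow_right (by norm_num) (by omega)
      omega
    simp only [show n + 1 + 1 = n + 2 from rfl, show n + 1 + 3 = n + 4 from rfl]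
    push_cast [Nat.cast_sub hle3, Nat.cast_sub hle1, Nat.cast_sub hle2]
    have hx : (0:ℝ) < 2 ^ n := by positivity
    have e1 : (2:ℝ) ^ (n + 1) = 2 ^ n * 2 := by rw [pow_succ]
    have e2 : (2:ℝ) ^ (n + 2) = 2 ^ n * 4 := by rw [pow_add]; norm_num
    have e3 : (2:ℝ) ^ (n + 3) = 2 ^ n * 8 := by rw [pow_add]; norm_num
    have e4 : (2:ℝ) ^ (n + 4) = 2 ^ n * 16 := by rw [pow_add]; norm_num
    have e5 : (4:ℝ) ^ (n + 2) = (2 ^ n) ^ 2 * 16 := by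
      rw [show (4:ℝ) = 2 ^ 2 by norm_num, ← pow_mul]
      rw [show 2 * (n + 2) = n + (n + 4) by ring, pow_add, e4]
      ring
    rw [e1, e2, e3, e4, e5]
    field_simp
    ring

lemma G0fin_eq (n : ℕ) : G0fin n = (boxI n).erase 0 := rfl



lemma matOpNorm_add_le {ι : Type*} [Fintype ι] [DecidableEq ι] (A B : Matrix ι ι ℂ) :
    matOpNorm (A + B) ≤ matOpNorm A + matOpNorm B := by
  unfold matOpNorm; rw [map_add, map_add]; exact norm_add_le _ _

lemma norm_exp_neg_I_mul_real (r : ℝ) : ‖Complex.exp (-(Complex.I * (r:ℂ)))‖ = 1 := by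
  rw [Complex.norm_exp]
  simp

lemma UopW_sub (n_p η L : ℕ) (Ω : ℝ) (ζ : Fin L → ℝ)
    (R : Fin L → EuclideanSpace ℝ (Fin 3)) (w₁ w₂ : (Fin 3 → ℤ) → ℝ) :
    UopW n_p η L Ω ζ R w₁ - UopW n_p η L Ω ζ R w₂
      = UopW n_p η L Ω ζ R (fun ν => w₁ ν - w₂ ν) := by
  unfold UopW
  have h : ∀ (A B : Matrix (Fin η → ↥(Gfin n_p)) (Fin η → ↥(Gfin n_p)) ℂ),
      -A - -B = -(A - B) := fun A B => by abel
  rw [h, ← Finset.sum_sub_distrib]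
  congr 1
  apply Finset.sum_congr rfl
  intro ν _
  rw [← Finset.sum_sub_distrib]
  apply Finset.sum_congr rfl
  intro ℓ _
  rw [← sub_smul, ← Complex.ofReal_sub, ← mul_sub]

lemma VopW_sub (n_p η : ℕ) (Ω : ℝ) (w₁ w₂ : (Fin 3 → ℤ) → ℝ) :
    VopW n_p η Ω w₁ - VopW n_p η Ω w₂ = VopW n_p η Ω (fun ν => w₁ ν - w₂ ν) := by
  unfold VopW
  rw [← Finset.sum_sub_distrib]
  apply Finset.sum_congr rfl
  intro ν _
  rw [← sub_smul, ← Complex.ofReal_sub, ← mul_sub]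

lemma matOpNorm_UopW_le (n_p η L : ℕ) (Ω : ℝ) (hΩ : 0 < Ω) (ζ : Fin L → ℝ)
    (hζ : ∀ ℓ, 0 < ζ ℓ) (R : Fin L → EuclideanSpace ℝ (Fin 3))
    (w : (Fin 3 → ℤ) → ℝ) :
    matOpNorm (UopW n_p η L Ω ζ R w) ≤
      (∑ ℓ, ζ ℓ) * η / (Real.pi * Ω ^ ((1:ℝ)/3)) * ∑ ν ∈ G0fin n_p, |w ν| := by
  have hπω : 0 < Real.pi * Ω ^ ((1:ℝ)/3) :=
    mul_pos Real.pi_pos (Real.rpow_pos_of_pos hΩ _)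
  unfold UopW
  rw [matOpNorm_neg]
  refine le_trans (matOpNorm_sum_le _ _) ?_
  rw [Finset.mul_sum]
  apply Finset.sum_le_sum
  intro ν _
  refine le_trans (matOpNorm_sum_le _ _) ?_
  have hterm : ∀ ℓ : Fin L,
      matOpNorm ((Complex.ofReal (ζ ℓ / (Real.pi * Ω ^ ((1:ℝ)/3)) * w ν)) •
        ∑ j : Fin η,
          Complex.exp (-(Complex.I * Complex.ofReal (inner ℝ (kvec Ω ν) (R ℓ)))) •
            Sop n_p η ν j)
      ≤ ζ ℓ * (|w ν| * η / (Real.pi * Ω ^ ((1:ℝ)/3))) := by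
    intro ℓ
    rw [matOpNorm_smul]
    have h1 : ‖(Complex.ofReal (ζ ℓ / (Real.pi * Ω ^ ((1:ℝ)/3)) * w ν))‖
        = ζ ℓ / (Real.pi * Ω ^ ((1:ℝ)/3)) * |w ν| := by
      rw [Complex.norm_real, Real.norm_eq_abs, abs_mul, abs_of_pos (div_pos (hζ ℓ) hπω)]
    rw [h1]
    have h2 : matOpNorm (∑ j : Fin η,
        Complex.exp (-(Complex.I * Complex.ofReal (inner ℝ (kvec Ω ν) (R ℓ)))) •
          Sop n_p η ν j) ≤ (η : ℝ) := by
      refine le_trans (matOpNorm_sum_le _ _) ?_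
      have h3 : ∀ j : Fin η, matOpNorm
          (Complex.exp (-(Complex.I * Complex.ofReal (inner ℝ (kvec Ω ν) (R ℓ)))) •
            Sop n_p η ν j) ≤ 1 := by
        intro j
        rw [matOpNorm_smul, norm_exp_neg_I_mul_real, one_mul]
        exact matOpNorm_Sop_le n_p η ν j
      refine le_trans (Finset.sum_le_sum fun j _ => h3 j) ?_
      simp
    calc ζ ℓ / (Real.pi * Ω ^ ((1:ℝ)/3)) * |w ν| * matOpNorm _
        ≤ ζ ℓ / (Real.pi * Ω ^ ((1:ℝ)/3)) * |w ν| * η := by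
          exact mul_le_mul_of_nonneg_left h2
            (mul_nonneg (div_pos (hζ ℓ) hπω).le (abs_nonneg _))
      _ = ζ ℓ * (|w ν| * η / (Real.pi * Ω ^ ((1:ℝ)/3))) := by ring
  refine le_trans (Finset.sum_le_sum fun ℓ _ => hterm ℓ) (le_of_eq ?_)
  rw [← Finset.sum_mul]
  ring

lemma matOpNorm_VopW_le (n_p η : ℕ) (Ω : ℝ) (hΩ : 0 < Ω) (w : (Fin 3 → ℤ) → ℝ) :
    matOpNorm (VopW n_p η Ω w) ≤
      (η : ℝ) * ((η : ℝ) - 1) / (2 * Real.pi * Ω ^ ((1:ℝ)/3)) * ∑ ν ∈ G0fin n_p, |w ν| := by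
  have hπω : 0 < 2 * Real.pi * Ω ^ ((1:ℝ)/3) := by
    have := Real.rpow_pos_of_pos hΩ ((1:ℝ)/3)
    have := Real.pi_pos
    positivity
  unfold VopW
  refine le_trans (matOpNorm_sum_le _ _) ?_
  rw [Finset.mul_sum]
  apply Finset.sum_le_sum
  intro ν _
  rw [matOpNorm_smul]
  have h1 : ‖(Complex.ofReal (1 / (2 * Real.pi * Ω ^ ((1:ℝ)/3)) * w ν))‖
      = 1 / (2 * Real.pi * Ω ^ ((1:ℝ)/3)) * |w ν| := by
    rw [Complex.norm_real, Real.norm_eq_abs, abs_mul, abs_of_pos (by positivity)]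
  rw [h1]
  have h2 : matOpNorm (∑ i : Fin η, ∑ j : Fin η,
      if i = j then 0 else
        ∑ p' : ↥(Gfin n_p), ∑ p : ↥(Gfin n_p), ∑ q' : ↥(Gfin n_p), ∑ q : ↥(Gfin n_p),
          if (p' : Fin 3 → ℤ) = (p : Fin 3 → ℤ) + ν ∧
              (q' : Fin 3 → ℤ) = (q : Fin 3 → ℤ) - ν then
            ketbra i p' p * ketbra j q' q
          else 0) ≤ (η : ℝ) * ((η : ℝ) - 1) := by
    refine le_trans (matOpNorm_sum_le _ _) ?_
    have hrow : ∀ i : Fin η, matOpNorm (∑ j : Fin η,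
        if i = j then 0 else
          ∑ p' : ↥(Gfin n_p), ∑ p : ↥(Gfin n_p), ∑ q' : ↥(Gfin n_p), ∑ q : ↥(Gfin n_p),
            if (p' : Fin 3 → ℤ) = (p : Fin 3 → ℤ) + ν ∧
                (q' : Fin 3 → ℤ) = (q : Fin 3 → ℤ) - ν then
              ketbra i p' p * ketbra j q' q
            else 0) ≤ (η : ℝ) - 1 := by
      intro i
      refine le_trans (matOpNorm_sum_le _ _) ?_
      have hj : ∀ j : Fin η, matOpNorm
          (if i = j then 0 else
            ∑ p' : ↥(Gfin n_p), ∑ p : ↥(Gfin n_p), ∑ q' : ↥(Gfin n_p), ∑ q : ↥(Gfin n_p),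
              if (p' : Fin 3 → ℤ) = (p : Fin 3 → ℤ) + ν ∧
                  (q' : Fin 3 → ℤ) = (q : Fin 3 → ℤ) - ν then
                ketbra i p' p * ketbra j q' q
              else 0) ≤ if i = j then 0 else 1 := by
        intro j
        by_cases hij : i = j
        · rw [if_pos hij, if_pos hij, matOpNorm_zero]
        · rw [if_neg hij, if_neg hij]
          exact matOpNorm_Vterm_le n_p η ν hij
      refine le_trans (Finset.sum_le_sum fun j _ => hj j) (le_of_eq ?_)
      have h4 : ∀ j : Fin η, (if i = j then (0:ℝ) else 1)
          = 1 - (if i = j then 1 else 0) := by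
        intro j; split_ifs <;> ring
      rw [Finset.sum_congr rfl fun j _ => h4 j, Finset.sum_sub_distrib,
        Finset.sum_const, Finset.sum_ite_eq]
      simp
    refine le_trans (Finset.sum_le_sum fun i _ => hrow i) (le_of_eq ?_)
    rw [Finset.sum_const]
    simp [mul_sub]
  calc 1 / (2 * Real.pi * Ω ^ ((1:ℝ)/3)) * |w ν| * matOpNorm _
      ≤ 1 / (2 * Real.pi * Ω ^ ((1:ℝ)/3)) * |w ν| * ((η:ℝ) * ((η:ℝ) - 1)) := by
        apply mul_le_mul_of_nonneg_left h2 (by positivity)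
    _ = (η : ℝ) * ((η : ℝ) - 1) / (2 * Real.pi * Ω ^ ((1:ℝ)/3)) * |w ν| := by ring


/-- Error bound for the block-encoded potential with the approximate state preparation:
with `M = 2^{n_M}`,
`‖(U + V) − (Ũ + Ṽ)‖ ≤ (2η/(π M Ω^{1/3}))·(η − 1 + 2λ_ζ)
    ·(7·2^{n_p+1} − 9 n_p − 11 − 3·2^{−n_p})`. -/
theorem stmt_1 (n_p η L n_M : ℕ) (hnp : 0 < n_p) (hη : 1 ≤ η) (hL : 1 ≤ L)
    (hnM : 0 < n_M) (Ω : ℝ) (hΩ : 0 < Ω) (ζ : Fin L → ℝ) (hζ : ∀ ℓ, 0 < ζ ℓ)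
    (R : Fin L → EuclideanSpace ℝ (Fin 3)) :
    matOpNorm
        ((UopW n_p η L Ω ζ R (fun ν => 1 / enorm3 ν ^ 2)
            + VopW n_p η Ω (fun ν => 1 / enorm3 ν ^ 2))
          - (UopW n_p η L Ω ζ R (aCoeff ((2 : ℝ) ^ n_M))
              + VopW n_p η Ω (aCoeff ((2 : ℝ) ^ n_M))))
      ≤ (2 * η / (Real.pi * (2 : ℝ) ^ n_M * Ω ^ ((1 : ℝ) / 3))) *
          ((η : ℝ) - 1 + 2 * ∑ ℓ, ζ ℓ) *
          (7 * 2 ^ (n_p + 1) - 9 * (n_p : ℝ) - 11 - 3 / 2 ^ n_p) := by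
  have hπ := Real.pi_pos
  have hω : (0:ℝ) < Ω ^ ((1:ℝ)/3) := Real.rpow_pos_of_pos hΩ _
  have hM : (0:ℝ) < 2 ^ n_M := by positivity
  have hζsum : (0:ℝ) ≤ ∑ ℓ, ζ ℓ := Finset.sum_nonneg fun ℓ _ => (hζ ℓ).le
  have hη1 : (1:ℝ) ≤ (η:ℝ) := by exact_mod_cast hη
  set Δ : (Fin 3 → ℤ) → ℝ :=
    fun ν => 1 / enorm3 ν ^ 2 - aCoeff ((2:ℝ) ^ n_M) ν with hΔdef
  have hU : UopW n_p η L Ω ζ R (fun ν => 1 / enorm3 ν ^ 2)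
      - UopW n_p η L Ω ζ R (aCoeff ((2:ℝ) ^ n_M)) = UopW n_p η L Ω ζ R Δ := by
    rw [hΔdef]; exact UopW_sub _ _ _ _ _ _ _ _
  have hV : VopW n_p η Ω (fun ν => 1 / enorm3 ν ^ 2)
      - VopW n_p η Ω (aCoeff ((2:ℝ) ^ n_M)) = VopW n_p η Ω Δ := by
    rw [hΔdef]; exact VopW_sub _ _ _ _ _
  have hrw : (UopW n_p η L Ω ζ R (fun ν => 1 / enorm3 ν ^ 2)
        + VopW n_p η Ω (fun ν => 1 / enorm3 ν ^ 2))
      - (UopW n_p η L Ω ζ R (aCoeff ((2:ℝ) ^ n_M))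
        + VopW n_p η Ω (aCoeff ((2:ℝ) ^ n_M)))
      = UopW n_p η L Ω ζ R Δ + VopW n_p η Ω Δ := by
    rw [← hU, ← hV]; abel
  rw [hrw]
  have hsum : ∑ ν ∈ G0fin n_p, |Δ ν|
      ≤ (1 / 2 ^ n_M) * (7 * 2 ^ (n_p + 3) - 36 * n_p - 44 - 12 / 2 ^ n_p) := by
    have h1 : ∀ ν ∈ G0fin n_p, |Δ ν| ≤ (1 / 2 ^ n_M) * (16 / (4:ℝ) ^ muIdx ν) := by
      intro ν hν
      have hν0 : ν ≠ 0 := (Finset.mem_erase.mp hν).1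
      refine le_trans (coeff_diff_bound hM hν0) (le_of_eq ?_)
      rw [div_mul_div_comm, one_mul]
    refine le_trans (Finset.sum_le_sum h1) ?_
    rw [← Finset.mul_sum, G0fin_eq, sum_mu_eq n_p hnp]
  have hΔnonneg : (0:ℝ) ≤ ∑ ν ∈ G0fin n_p, |Δ ν| :=
    Finset.sum_nonneg fun ν _ => abs_nonneg _
  set CU : ℝ := (∑ ℓ, ζ ℓ) * η / (Real.pi * Ω ^ ((1:ℝ)/3)) with hCU
  set CV : ℝ := (η : ℝ) * ((η : ℝ) - 1) / (2 * Real.pi * Ω ^ ((1:ℝ)/3)) with hCV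
  have hCUpos : 0 ≤ CU := by
    rw [hCU]
    exact div_nonneg (mul_nonneg hζsum (by positivity)) (by positivity)
  have hCVpos : 0 ≤ CV := by
    rw [hCV]
    exact div_nonneg (mul_nonneg (by positivity) (by linarith)) (by positivity)
  calc matOpNorm (UopW n_p η L Ω ζ R Δ + VopW n_p η Ω Δ)
      ≤ matOpNorm (UopW n_p η L Ω ζ R Δ) + matOpNorm (VopW n_p η Ω Δ) :=
        matOpNorm_add_le _ _
    _ ≤ CU * (∑ ν ∈ G0fin n_p, |Δ ν|) + CV * (∑ ν ∈ G0fin n_p, |Δ ν|) :=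
        add_le_add (matOpNorm_UopW_le n_p η L Ω hΩ ζ hζ R Δ)
          (matOpNorm_VopW_le n_p η Ω hΩ Δ)
    _ = (CU + CV) * (∑ ν ∈ G0fin n_p, |Δ ν|) := by ring
    _ ≤ (CU + CV) *
        ((1 / 2 ^ n_M) * (7 * 2 ^ (n_p + 3) - 36 * n_p - 44 - 12 / 2 ^ n_p)) :=
        mul_le_mul_of_nonneg_left hsum (by linarith)
    _ = (2 * η / (Real.pi * (2 : ℝ) ^ n_M * Ω ^ ((1 : ℝ) / 3))) *
          ((η : ℝ) - 1 + 2 * ∑ ℓ, ζ ℓ) *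
          (7 * 2 ^ (n_p + 1) - 9 * (n_p : ℝ) - 11 - 3 / 2 ^ n_p) := by
        rw [hCU, hCV]
        have e1 : (2:ℝ) ^ (n_p + 3) = 2 ^ (n_p + 1) * 4 := by
          rw [pow_add, pow_add]; ring
        rw [e1]
        field_simp
        ring


end
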